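/- Let p/q be a positive irreducible fraction with p even and p, q > 0. Then size(M(p/q)) < size(p/q), where M is the mother map and size(p/q) = p + q for the irreducible representation with non-negative numerator and positive denominator (size(1/0) = 1). -/

import Mathlib

/-- Evaluate the continued fraction `[a_0, …, a_{n-1}, x]` projectively:
the pair `(u, w)` represents the fraction `u/w` (with `(±1, 0)` representing
`∞`), and `[a, rest] = a + 1/rest` corresponds to `(u,w) ↦ (a*u + w, u)`. -/
def cfFold (l : List ℤ) (x : ℤ × ℤ) : ℤ × ℤ :=
  l.foldr (fun a y => (a * y.1 + y.2, y.1)) x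

/-- The coprime pair `(numerator, denominator)` of the continued fraction
`[a_0, …, a_n]`; the empty continued fraction is `∞ = (1, 0)`. -/
def cfPair (l : List ℤ) : ℤ × ℤ :=
  cfFold l (1, 0)

/-- The rational number represented by a pair. -/
def pairQ (x : ℤ × ℤ) : ℚ :=
  (x.1 : ℚ) / (x.2 : ℚ)

/-- The value of the continued fraction `[a_0, …, a_n]` as a rational number. -/
def cfVal (l : List ℤ) : ℚ :=
  pairQ (cfPair l)

/-- `l = [a_0, …, a_n]` is a standard continued fraction expansion:
`a_0 ≥ 0`, `a_i ≥ 1` for `1 ≤ i ≤ n`, and `a_n ≥ 2`. -/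
def IsStdCF (l : List ℤ) : Prop :=
  l ≠ [] ∧ 0 ≤ l.head! ∧ (∀ b ∈ l.tail, 1 ≤ b) ∧ 2 ≤ l.getLast!

lemma cfFold_cons (a : ℤ) (t : List ℤ) (x : ℤ × ℤ) :
    cfFold (a :: t) x = (a * (cfFold t x).1 + (cfFold t x).2, (cfFold t x).1) := rfl

lemma cfFold_sub (l : List ℤ) (x y : ℤ × ℤ) :
    cfFold l (x.1 - y.1, x.2 - y.2) =
      ((cfFold l x).1 - (cfFold l y).1, (cfFold l x).2 - (cfFold l y).2) := by
  induction l with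
  | nil => simp [cfFold]
  | cons a t ih =>
    simp only [cfFold_cons, ih, Prod.mk.injEq]
    exact ⟨by ring, trivial⟩

lemma cfFold_pos (l : List ℤ) (h : ∀ b ∈ l, 0 ≤ b) (x : ℤ × ℤ)
    (h1 : 0 ≤ x.1) (h2 : 0 ≤ x.2) (h3 : 0 < x.1 + x.2) :
    0 ≤ (cfFold l x).1 ∧ 0 ≤ (cfFold l x).2 ∧ 0 < (cfFold l x).1 + (cfFold l x).2 := by
  induction l with
  | nil => exact ⟨h1, h2, h3⟩
  | cons a t ih =>
    have ha : 0 ≤ a := h a (by simp)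
    obtain ⟨i1, i2, i3⟩ := ih (fun b hb => h b (by simp [hb]))
    rw [cfFold_cons]
    refine ⟨by positivity, i1, ?_⟩
    dsimp only
    nlinarith

/-- (Size decrease of the mother.)  Let `p/q` be a positive irreducible
fraction with `p` even, with standard continued fraction expansion
`l ++ [a]`.  The size of a non-negative irreducible fraction is
numerator plus denominator; then `size (M(p/q)) < size (p/q)`, where the
mother `M(p/q) = [a_0, …, a_{n-1}, a_n - 2]` is given in lowest terms by
`cfPair (l ++ [a-2])`. -/
theorem size_mother_lt (p q : ℤ) (hp : 0 < p) (hq : 0 < q)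
    (hco : Int.gcd p q = 1) (hev : 2 ∣ p)
    (l : List ℤ) (a : ℤ) (hstd : IsStdCF (l ++ [a]))
    (hval : cfPair (l ++ [a]) = (p, q)) :
    (cfPair (l ++ [a - 2])).1 + (cfPair (l ++ [a - 2])).2 < p + q := by
  obtain ⟨hne, hhead, htail, hlast⟩ := hstd
  have hl : ∀ b ∈ l, 0 ≤ b := by
    cases l with
    | nil => simp
    | cons c t =>
      intro b hb
      rcases List.mem_cons.1 hb with rfl | hb
      · simpa using hhead
      · have : b ∈ (c :: t ++ [a]).tail := by simp [hb]
        linarith [htail b this]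
  have key : ∀ x : ℤ × ℤ, cfPair (l ++ [x.1]) = cfFold l (x.1, 1) := by
    intro x
    simp [cfPair, cfFold, List.foldr_append]
  have h1 : cfPair (l ++ [a]) = cfFold l (a, 1) := key (a, 1)
  have h2 : cfPair (l ++ [a - 2]) = cfFold l (a - 2, 1) := key (a - 2, 1)
  have hsub : cfFold l (a - 2, 1) =
      ((cfFold l (a, 1)).1 - (cfFold l (2, 0)).1,
       (cfFold l (a, 1)).2 - (cfFold l (2, 0)).2) := by
    have := cfFold_sub l (a, 1) (2, 0)
    simpa using this
  obtain ⟨p1, p2, p3⟩ := cfFold_pos l hl (2, 0) (by norm_num) le_rfl (by norm_num)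
  have hpq : cfFold l (a, 1) = (p, q) := h1.symm.trans hval
  rw [h2, hsub, hpq]
  dsimp only
  linarith
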